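/- Each of the removal-based contribution function ctrb^r, the intrinsic-removal contribution function ctrb^{ri}, and the gradient-based contribution function ctrb^g violates the quantitative contribution existence principle with respect to the QE semantics and with respect to the EB semantics: for each of these two semantics there exist an acyclic QBAG G and an argument a ∈ A such that Σ_{x ∈ A∖{a}} ctrb_{G,a}(x) ≠ σ_G(a) − τ(a), where ctrb is ctrb^r, ctrb^{ri}, or ctrb^g. (A witness is the QBAG with A = {a, b, c}, τ(a) = 0.5, τ(b) = τ(c) = 1, and attacks (b,a), (c,a).) -/

import Mathlib

open Finset

/-- A quantitative bipolar argumentation graph (QBAG): a finite set of arguments,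
an initial strength function, and attack and support relations. -/
structure QBAG where
  args : Finset ℕ
  tau : ℕ → ℝ
  att : Finset (ℕ × ℕ)
  supp : Finset (ℕ × ℕ)

namespace QBAG

/-- The edge relation of the underlying directed graph (attack or support). -/
def edge (G : QBAG) (x y : ℕ) : Prop := (x, y) ∈ G.att ∨ (x, y) ∈ G.supp

/-- Well-formedness: edges live on the arguments, attack and support are disjoint,
and initial strengths lie in [0,1]. -/
def WF (G : QBAG) : Prop :=
  (∀ p ∈ G.att, p.1 ∈ G.args ∧ p.2 ∈ G.args) ∧
  (∀ p ∈ G.supp, p.1 ∈ G.args ∧ p.2 ∈ G.args) ∧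
  Disjoint G.att G.supp ∧
  (∀ a ∈ G.args, G.tau a ∈ Set.Icc (0 : ℝ) 1)

/-- Acyclicity of the directed graph (A, Att ∪ Supp). -/
def Acyclic (G : QBAG) : Prop := ∀ x, ¬ Relation.TransGen G.edge x x

/-- Direct attackers of an argument. -/
def attackers (G : QBAG) (a : ℕ) : Finset ℕ :=
  (G.att.filter (fun p => p.2 = a)).image Prod.fst

/-- Direct supporters of an argument. -/
def supporters (G : QBAG) (a : ℕ) : Finset ℕ :=
  (G.supp.filter (fun p => p.2 = a)).image Prod.fst

/-- Restriction G↓S of a QBAG to a subset S of the arguments. -/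
def restrict (G : QBAG) (S : Finset ℕ) : QBAG where
  args := G.args ∩ S
  tau := G.tau
  att := G.att.filter (fun p => p.1 ∈ S ∧ p.2 ∈ S)
  supp := G.supp.filter (fun p => p.1 ∈ S ∧ p.2 ∈ S)

/-- G⁻: the QBAG G with every attack and support edge pointing into x removed. -/
def dropInto (G : QBAG) (x : ℕ) : QBAG where
  args := G.args
  tau := G.tau
  att := G.att.filter (fun p => p.2 ≠ x)
  supp := G.supp.filter (fun p => p.2 ≠ x)

/-- G[x←ε]: the QBAG G with the initial strength of x replaced by ε. -/
def setTau (G : QBAG) (x : ℕ) (ε : ℝ) : QBAG where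
  args := G.args
  tau := Function.update G.tau x ε
  att := G.att
  supp := G.supp

end QBAG

noncomputable section

/-- Sum aggregation. -/
def sumAgg (G : QBAG) (s : ℕ → ℝ) (a : ℕ) : ℝ :=
  (∑ y ∈ G.supporters a, s y) - (∑ y ∈ G.attackers a, s y)

/-- Product aggregation. -/
def prodAgg (G : QBAG) (s : ℕ → ℝ) (a : ℕ) : ℝ :=
  (∏ y ∈ G.attackers a, (1 - s y)) - (∏ y ∈ G.supporters a, (1 - s y))

/-- Top aggregation. -/
def topAgg (G : QBAG) (s : ℕ → ℝ) (a : ℕ) : ℝ :=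
  (G.supporters a).fold max 0 s - (G.attackers a).fold max 0 s

/-- h for the 2-Max(1) influence function. -/
def h2 (x : ℝ) : ℝ := max 0 x ^ 2 / (1 + max 0 x ^ 2)

/-- h for the 1-Max(1) influence function. -/
def h1 (x : ℝ) : ℝ := max 0 x / (1 + max 0 x)

/-- 2-Max(1) influence function (used by QE). -/
def iotaQE (w s : ℝ) : ℝ := w - w * h2 (-s) + (1 - w) * h2 s

/-- Linear(1) influence function (used by DFQuAD). -/
def iotaLin (w s : ℝ) : ℝ := w - w * max 0 (-s) + (1 - w) * max 0 s

/-- 1-Max(1) influence function (used by SD-DFQuAD). -/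
def iotaSD (w s : ℝ) : ℝ := w - w * h1 (-s) + (1 - w) * h1 s

/-- Euler-based influence function (used by EB and EBT). -/
def iotaEB (w s : ℝ) : ℝ := 1 - (1 - w ^ 2) / (1 + w * Real.exp s)

/-- σ is a modular semantics with aggregation `agg` and influence `iota`:
on every well-formed acyclic QBAG the final strengths satisfy the defining equations. -/
def IsSemantics (agg : QBAG → (ℕ → ℝ) → ℕ → ℝ) (iota : ℝ → ℝ → ℝ)
    (σ : QBAG → ℕ → ℝ) : Prop :=
  ∀ G : QBAG, G.WF → G.Acyclic → ∀ a ∈ G.args, σ G a = iota (G.tau a) (agg G (σ G) a)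

/-- QE semantics. -/
def IsQE (σ : QBAG → ℕ → ℝ) : Prop := IsSemantics sumAgg iotaQE σ

/-- DFQuAD semantics. -/
def IsDF (σ : QBAG → ℕ → ℝ) : Prop := IsSemantics prodAgg iotaLin σ

/-- SD-DFQuAD semantics. -/
def IsSD (σ : QBAG → ℕ → ℝ) : Prop := IsSemantics prodAgg iotaSD σ

/-- EB semantics. -/
def IsEB (σ : QBAG → ℕ → ℝ) : Prop := IsSemantics sumAgg iotaEB σ

/-- EBT semantics. -/
def IsEBT (σ : QBAG → ℕ → ℝ) : Prop := IsSemantics topAgg iotaEB σ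

/-- A gradual semantics assigns final strengths in [0,1] on acyclic QBAGs. -/
def IsGradualSemantics (σ : QBAG → ℕ → ℝ) : Prop :=
  ∀ G : QBAG, G.WF → G.Acyclic → ∀ a ∈ G.args, σ G a ∈ Set.Icc (0 : ℝ) 1

/-- Removal-based contribution: ctrb^r_{G,a}(x) = σ_G(a) − σ_{G↓(A∖{x})}(a). -/
def ctrbR (σ : QBAG → ℕ → ℝ) (G : QBAG) (a x : ℕ) : ℝ :=
  σ G a - σ (G.restrict (G.args.erase x)) a

/-- Intrinsic-removal contribution: ctrb^{ri}_{G,a}(x) = σ_{G⁻}(a) − σ_{G↓(A∖{x})}(a). -/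
def ctrbRI (σ : QBAG → ℕ → ℝ) (G : QBAG) (a x : ℕ) : ℝ :=
  σ (G.dropInto x) a - σ (G.restrict (G.args.erase x)) a

/-- Shapley-based contribution. -/
def ctrbS (σ : QBAG → ℕ → ℝ) (G : QBAG) (a x : ℕ) : ℝ :=
  ∑ X ∈ ((G.args.erase a).erase x).powerset,
    ((X.card.factorial : ℝ) * ((G.args.erase a).card - X.card - 1).factorial /
      (G.args.erase a).card.factorial) *
    (σ (G.restrict (G.args \ X)) a - σ (G.restrict (G.args \ insert x X)) a)

/-- Gradient-based contribution: the derivative at ε = τ(x) (within [0,1]) of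
the map ε ↦ σ_{G[x←ε]}(a). -/
def ctrbG (σ : QBAG → ℕ → ℝ) (G : QBAG) (a x : ℕ) : ℝ :=
  derivWithin (fun ε => σ (G.setTau x ε) a) (Set.Icc (0 : ℝ) 1) (G.tau x)

/-- The contribution existence principle. -/
def ContributionExistence (ctrb : QBAG → ℕ → ℕ → ℝ) (σ : QBAG → ℕ → ℝ) : Prop :=
  ∀ G : QBAG, G.WF → G.Acyclic → ∀ a ∈ G.args,
    σ G a ≠ G.tau a → ∃ x ∈ G.args, x ≠ a ∧ ctrb G a x ≠ 0

/-- The quantitative contribution existence principle. -/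
def QuantContributionExistence (ctrb : QBAG → ℕ → ℕ → ℝ) (σ : QBAG → ℕ → ℝ) : Prop :=
  ∀ G : QBAG, G.WF → G.Acyclic → ∀ a ∈ G.args,
    ∑ x ∈ G.args.erase a, ctrb G a x = σ G a - G.tau a

/-- The strong faithfulness principle. -/
def StrongFaithfulness (ctrb : QBAG → ℕ → ℕ → ℝ) (σ : QBAG → ℕ → ℝ) : Prop :=
  ∀ G : QBAG, G.WF → G.Acyclic → ∀ a ∈ G.args, ∀ x ∈ G.args,
    ∀ ε ∈ Set.Icc (0 : ℝ) 1,
      (ctrb G a x < 0 →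
        (ε < G.tau x → σ G a < σ (G.setTau x ε) a) ∧
        (ε > G.tau x → σ G a > σ (G.setTau x ε) a)) ∧
      (ctrb G a x = 0 → σ G a = σ (G.setTau x ε) a) ∧
      (ctrb G a x > 0 →
        (ε < G.tau x → σ G a > σ (G.setTau x ε) a) ∧
        (ε > G.tau x → σ G a < σ (G.setTau x ε) a))

/-- The local faithfulness principle. -/
def LocalFaithfulness (ctrb : QBAG → ℕ → ℕ → ℝ) (σ : QBAG → ℕ → ℝ) : Prop :=
  ∀ G : QBAG, G.WF → G.Acyclic → ∀ a ∈ G.args, ∀ x ∈ G.args,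
    ∃ δ > 0, ∀ ε ∈ Set.Icc (G.tau x - δ) (G.tau x + δ) ∩ Set.Icc (0 : ℝ) 1,
      (ctrb G a x < 0 →
        (ε < G.tau x → σ G a < σ (G.setTau x ε) a) ∧
        (ε > G.tau x → σ G a > σ (G.setTau x ε) a)) ∧
      (ctrb G a x > 0 →
        (ε < G.tau x → σ G a > σ (G.setTau x ε) a) ∧
        (ε > G.tau x → σ G a < σ (G.setTau x ε) a))

/-- The quantitative local faithfulness principle: the map ε ↦ σ_{G[x←ε]}(a) is
differentiable (within [0,1]) at τ(x) with derivative ctrb_{G,a}(x); equivalently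
σ_{G[x←τ(x)+ε]}(a) = σ_G(a) + ε·ctrb_{G,a}(x) + e(ε) with e(ε)/ε → 0. -/
def QuantLocalFaithfulness (ctrb : QBAG → ℕ → ℕ → ℝ) (σ : QBAG → ℕ → ℝ) : Prop :=
  ∀ G : QBAG, G.WF → G.Acyclic → ∀ a ∈ G.args, ∀ x ∈ G.args,
    HasDerivWithinAt (fun ε => σ (G.setTau x ε) a) (ctrb G a x)
      (Set.Icc (0 : ℝ) 1) (G.tau x)

/-- The counterfactuality principle. -/
def Counterfactuality (ctrb : QBAG → ℕ → ℕ → ℝ) (σ : QBAG → ℕ → ℝ) : Prop :=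
  ∀ G : QBAG, G.WF → G.Acyclic → ∀ a ∈ G.args, ∀ x ∈ G.args,
    (ctrb G a x < 0 → σ G a < σ (G.restrict (G.args.erase x)) a) ∧
    (ctrb G a x = 0 → σ G a = σ (G.restrict (G.args.erase x)) a) ∧
    (ctrb G a x > 0 → σ G a > σ (G.restrict (G.args.erase x)) a)

/-- The quantitative counterfactuality principle. -/
def QuantCounterfactuality (ctrb : QBAG → ℕ → ℕ → ℝ) (σ : QBAG → ℕ → ℝ) : Prop :=
  ∀ G : QBAG, G.WF → G.Acyclic → ∀ a ∈ G.args, ∀ x ∈ G.args,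
    ctrb G a x = σ G a - σ (G.restrict (G.args.erase x)) a

end

noncomputable section AuxCE

def tau0 : ℕ → ℝ := fun n => if n = 0 then 1/2 else 1

def Gw : QBAG := ⟨{0,1,2}, tau0, {(1,0),(2,0)}, ∅⟩

lemma acyclic_of_lt (H : QBAG) (h : ∀ x y, H.edge x y → y < x) : H.Acyclic := by
  intro x hx
  have h2 := Relation.TransGen.mono (p := fun a b : ℕ => b < a) h x x hx
  rw [@Relation.transGen_eq_self _ _ ⟨fun a b c h1 h2 => h2.trans h1⟩] at h2
  exact lt_irrefl x h2

lemma sigma_two (ι : ℝ → ℝ → ℝ) (σ : QBAG → ℕ → ℝ)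
    (hι0 : ∀ w : ℝ, 0 ≤ w → ι w 0 = w)
    (hσ : IsSemantics sumAgg ι σ) (H : QBAG)
    (hargs : H.args = {0,1,2}) (hatt : H.att = {(1,0),(2,0)}) (hsupp : H.supp = ∅)
    (h0 : H.tau 0 = 1/2) (h1 : H.tau 1 ∈ Set.Icc (0:ℝ) 1) (h2 : H.tau 2 ∈ Set.Icc (0:ℝ) 1) :
    σ H 0 = ι (1/2) (-(H.tau 1 + H.tau 2)) := by
  have hwf : H.WF := by
    refine ⟨?_, ?_, ?_, ?_⟩
    · intro p hp; rw [hatt] at hp; rw [hargs]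
      fin_cases hp <;> simp
    · intro p hp; rw [hsupp] at hp; simp at hp
    · rw [hsupp]; exact Finset.disjoint_empty_right _
    · intro a ha; rw [hargs] at ha
      fin_cases ha
      · rw [h0]; constructor <;> norm_num
      · exact h1
      · exact h2
  have hacy : H.Acyclic := by
    apply acyclic_of_lt
    intro x y hxy
    rcases hxy with hm | hm
    · rw [hatt] at hm; simp [Prod.ext_iff] at hm; omega
    · rw [hsupp] at hm; simp at hm
  have hA0 : H.attackers 0 = {1,2} := by rw [QBAG.attackers, hatt]; decide
  have hA1 : H.attackers 1 = ∅ := by rw [QBAG.attackers, hatt]; decide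
  have hA2 : H.attackers 2 = ∅ := by rw [QBAG.attackers, hatt]; decide
  have hS : ∀ a, H.supporters a = ∅ := by
    intro a; rw [QBAG.supporters, hsupp]; simp
  have e1 : σ H 1 = H.tau 1 := by
    rw [hσ H hwf hacy 1 (by rw [hargs]; decide), sumAgg, hA1, hS]
    simp [hι0 _ h1.1]
  have e2 : σ H 2 = H.tau 2 := by
    rw [hσ H hwf hacy 2 (by rw [hargs]; decide), sumAgg, hA2, hS]
    simp [hι0 _ h2.1]
  rw [hσ H hwf hacy 0 (by rw [hargs]; decide), sumAgg, hA0, hS 0,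
    Finset.sum_empty, Finset.sum_pair (by decide : (1:ℕ) ≠ 2), e1, e2, h0, zero_sub]

lemma sigma_one (ι : ℝ → ℝ → ℝ) (σ : QBAG → ℕ → ℝ)
    (hι0 : ∀ w : ℝ, 0 ≤ w → ι w 0 = w)
    (hσ : IsSemantics sumAgg ι σ) (H : QBAG) (b : ℕ) (hb : b ≠ 0)
    (hargs : H.args = {0,b}) (hatt : H.att = {(b,0)}) (hsupp : H.supp = ∅)
    (h0 : H.tau 0 = 1/2) (h1 : H.tau b ∈ Set.Icc (0:ℝ) 1) :
    σ H 0 = ι (1/2) (-(H.tau b)) := by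
  have hwf : H.WF := by
    refine ⟨?_, ?_, ?_, ?_⟩
    · intro p hp; rw [hatt] at hp; rw [hargs]
      simp at hp; subst hp; simp
    · intro p hp; rw [hsupp] at hp; simp at hp
    · rw [hsupp]; exact Finset.disjoint_empty_right _
    · intro a ha; rw [hargs] at ha
      simp at ha
      rcases ha with rfl | rfl
      · rw [h0]; constructor <;> norm_num
      · exact h1
  have hacy : H.Acyclic := by
    apply acyclic_of_lt
    intro x y hxy
    rcases hxy with hm | hm
    · rw [hatt] at hm; simp [Prod.ext_iff] at hm
      omega
    · rw [hsupp] at hm; simp at hm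
  have hA0 : H.attackers 0 = {b} := by
    rw [QBAG.attackers, hatt, Finset.filter_singleton]
    simp
  have hAb : H.attackers b = ∅ := by
    rw [QBAG.attackers, hatt, Finset.filter_singleton]
    simp [Ne.symm hb]
  have hS : ∀ a, H.supporters a = ∅ := by
    intro a; rw [QBAG.supporters, hsupp]; simp
  have e1 : σ H b = H.tau b := by
    rw [hσ H hwf hacy b (by rw [hargs]; simp), sumAgg, hAb, hS]
    simp [hι0 _ h1.1]
  rw [hσ H hwf hacy 0 (by rw [hargs]; simp), sumAgg, hA0, hS 0,
    Finset.sum_empty, Finset.sum_singleton, e1, h0, zero_sub]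

lemma GwWF : Gw.WF := by
  refine ⟨by decide, by decide, by decide, ?_⟩
  intro a ha
  fin_cases ha <;> norm_num [Gw, tau0]

lemma GwAcy : Gw.Acyclic := by
  apply acyclic_of_lt
  intro x y hxy
  rcases hxy with hm | hm
  · simp [Gw, Prod.ext_iff] at hm; omega
  · simp [Gw] at hm

lemma main_aux (ι : ℝ → ℝ → ℝ) (σ : QBAG → ℕ → ℝ)
    (hι0 : ∀ w : ℝ, 0 ≤ w → ι w 0 = w)
    (hσ : IsSemantics sumAgg ι σ)
    (D : ℝ)
    (hD : HasDerivAt (fun ε : ℝ => ι (1/2) (-(ε+1))) D 1)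
    (hne1 : 2 * (ι (1/2) (-2) - ι (1/2) (-1)) ≠ ι (1/2) (-2) - 1/2)
    (hne2 : 2 * D ≠ ι (1/2) (-2) - 1/2) :
    ∃ G : QBAG, G.WF ∧ G.Acyclic ∧ ∃ a ∈ G.args,
        (∑ x ∈ G.args.erase a, ctrbR σ G a x) ≠ σ G a - G.tau a ∧
        (∑ x ∈ G.args.erase a, ctrbRI σ G a x) ≠ σ G a - G.tau a ∧
        (∑ x ∈ G.args.erase a, ctrbG σ G a x) ≠ σ G a - G.tau a := by
  have htau0 : Gw.tau 0 = 1/2 := by norm_num [Gw, tau0]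
  have htau1 : Gw.tau 1 = 1 := by norm_num [Gw, tau0]
  have htau2 : Gw.tau 2 = 1 := by norm_num [Gw, tau0]
  have hG : σ Gw 0 = ι (1/2) (-2) := by
    have h := sigma_two ι σ hι0 hσ Gw rfl rfl rfl htau0
      (by rw [htau1]; norm_num) (by rw [htau2]; norm_num)
    rw [h, htau1, htau2]; norm_num
  have hR1 : σ (Gw.restrict (Gw.args.erase 1)) 0 = ι (1/2) (-1) := by
    have h := sigma_one ι σ hι0 hσ (Gw.restrict (Gw.args.erase 1)) 2 (by decide)
      (by decide) (by decide) (by decide) htau0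
      (show Gw.tau 2 ∈ _ by rw [htau2]; norm_num)
    rw [h]; show ι _ (-(Gw.tau 2)) = _; rw [htau2]
  have hR2 : σ (Gw.restrict (Gw.args.erase 2)) 0 = ι (1/2) (-1) := by
    have h := sigma_one ι σ hι0 hσ (Gw.restrict (Gw.args.erase 2)) 1 (by decide)
      (by decide) (by decide) (by decide) htau0
      (show Gw.tau 1 ∈ _ by rw [htau1]; norm_num)
    rw [h]; show ι _ (-(Gw.tau 1)) = _; rw [htau1]
  have hDI1 : σ (Gw.dropInto 1) 0 = ι (1/2) (-2) := by
    have h := sigma_two ι σ hι0 hσ (Gw.dropInto 1) rfl (by decide) (by decide) htau0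
      (show Gw.tau 1 ∈ _ by rw [htau1]; norm_num)
      (show Gw.tau 2 ∈ _ by rw [htau2]; norm_num)
    rw [h]; show ι _ (-(Gw.tau 1 + Gw.tau 2)) = _; rw [htau1, htau2]; norm_num
  have hDI2 : σ (Gw.dropInto 2) 0 = ι (1/2) (-2) := by
    have h := sigma_two ι σ hι0 hσ (Gw.dropInto 2) rfl (by decide) (by decide) htau0
      (show Gw.tau 1 ∈ _ by rw [htau1]; norm_num)
      (show Gw.tau 2 ∈ _ by rw [htau2]; norm_num)
    rw [h]; show ι _ (-(Gw.tau 1 + Gw.tau 2)) = _; rw [htau1, htau2]; norm_num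
  have hT1 : ∀ ε ∈ Set.Icc (0:ℝ) 1, σ (Gw.setTau 1 ε) 0 = ι (1/2) (-(ε+1)) := by
    intro ε hε
    have e0 : (Gw.setTau 1 ε).tau 0 = 1/2 := by
      show Function.update Gw.tau 1 ε 0 = 1/2
      rw [Function.update_of_ne (by decide)]; exact htau0
    have e1 : (Gw.setTau 1 ε).tau 1 = ε := by
      show Function.update Gw.tau 1 ε 1 = ε; rw [Function.update_self]
    have e2 : (Gw.setTau 1 ε).tau 2 = 1 := by
      show Function.update Gw.tau 1 ε 2 = 1
      rw [Function.update_of_ne (by decide)]; exact htau2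
    have h := sigma_two ι σ hι0 hσ (Gw.setTau 1 ε) rfl rfl rfl e0
      (by rw [e1]; exact hε) (by rw [e2]; norm_num)
    rw [h, e1, e2]
  have hT2 : ∀ ε ∈ Set.Icc (0:ℝ) 1, σ (Gw.setTau 2 ε) 0 = ι (1/2) (-(ε+1)) := by
    intro ε hε
    have e0 : (Gw.setTau 2 ε).tau 0 = 1/2 := by
      show Function.update Gw.tau 2 ε 0 = 1/2
      rw [Function.update_of_ne (by decide)]; exact htau0
    have e1 : (Gw.setTau 2 ε).tau 1 = 1 := by
      show Function.update Gw.tau 2 ε 1 = 1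
      rw [Function.update_of_ne (by decide)]; exact htau1
    have e2 : (Gw.setTau 2 ε).tau 2 = ε := by
      show Function.update Gw.tau 2 ε 2 = ε; rw [Function.update_self]
    have h := sigma_two ι σ hι0 hσ (Gw.setTau 2 ε) rfl rfl rfl e0
      (by rw [e1]; norm_num) (by rw [e2]; exact hε)
    rw [h, e1, e2, show -((1:ℝ)+ε) = -(ε+1) from by ring]
  have hud : UniqueDiffWithinAt ℝ (Set.Icc (0:ℝ) 1) 1 :=
    (uniqueDiffOn_Icc (by norm_num)) 1 (Set.mem_Icc.mpr ⟨by norm_num, le_refl 1⟩)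
  have hg1 : ctrbG σ Gw 0 1 = D := by
    unfold ctrbG
    rw [htau1, derivWithin_congr (fun ε hε => hT1 ε hε)
      (hT1 1 (Set.mem_Icc.mpr ⟨by norm_num, le_refl 1⟩))]
    exact hD.hasDerivWithinAt.derivWithin hud
  have hg2 : ctrbG σ Gw 0 2 = D := by
    unfold ctrbG
    rw [htau2, derivWithin_congr (fun ε hε => hT2 ε hε)
      (hT2 1 (Set.mem_Icc.mpr ⟨by norm_num, le_refl 1⟩))]
    exact hD.hasDerivWithinAt.derivWithin hud
  have herase : Gw.args.erase 0 = {1,2} := by decide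
  refine ⟨Gw, GwWF, GwAcy, 0, by decide, ?_, ?_, ?_⟩
  · rw [herase, Finset.sum_pair (by decide : (1:ℕ) ≠ 2)]
    unfold ctrbR
    rw [hG, hR1, hR2, htau0]
    intro h; exact hne1 (by linarith)
  · rw [herase, Finset.sum_pair (by decide : (1:ℕ) ≠ 2)]
    unfold ctrbRI
    rw [hDI1, hDI2, hR1, hR2, hG, htau0]
    intro h; exact hne1 (by linarith)
  · rw [herase, Finset.sum_pair (by decide : (1:ℕ) ≠ 2)]
    rw [hg1, hg2, hG, htau0]
    intro h; exact hne2 (by linarith)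
lemma iotaQE_zero : ∀ w : ℝ, 0 ≤ w → iotaQE w 0 = w := by
  intro w _; norm_num [iotaQE, h2]

lemma iotaQE_m2 : iotaQE (1/2) (-2) = 1/10 := by norm_num [iotaQE, h2]

lemma iotaQE_m1 : iotaQE (1/2) (-1) = 1/4 := by norm_num [iotaQE, h2]

lemma hD_QE : HasDerivAt (fun ε : ℝ => iotaQE (1/2) (-(ε+1))) (-2/25) 1 := by
  have hid : HasDerivAt (fun ε:ℝ => ε + 1) 1 1 := (hasDerivAt_id 1).add_const 1
  have hu := hid.pow 2
  have hq := hu.div (hu.const_add 1) (by norm_num)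
  have hg : HasDerivAt (fun ε:ℝ => 1/2 - 1/2 * ((ε+1)^2 / (1+(ε+1)^2))) (-2/25) 1 := by
    convert (hq.const_mul (1/2:ℝ)).const_sub (1/2) using 1 <;> try rfl
    norm_num
  refine hg.congr_of_eventuallyEq ?_
  filter_upwards [isOpen_Ioi.mem_nhds (show (1:ℝ) ∈ Set.Ioi 0 by norm_num)] with ε hε
  have hε' : (0:ℝ) < ε := hε
  have e1 : max 0 (-(ε+1)) = (0:ℝ) := max_eq_left (by linarith)
  have e2 : max 0 (ε+1) = ε+1 := max_eq_right (by linarith)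
  simp only [iotaQE, h2, neg_neg, e1, e2]
  norm_num

lemma iotaEB_zero : ∀ w : ℝ, 0 ≤ w → iotaEB w 0 = w := by
  intro w hw
  rw [iotaEB, Real.exp_zero, mul_one]
  have h1 : (1:ℝ) + w ≠ 0 := by positivity
  field_simp
  ring

lemma exp_m1_lt : Real.exp (-1) < 1/2 := by
  have h := Real.exp_one_gt_d9
  have h2 : Real.exp (-1) * Real.exp 1 = 1 := by rw [← Real.exp_add]; norm_num
  nlinarith [Real.exp_pos (-1)]

lemma exp_m2_sq : Real.exp (-2) = Real.exp (-1) ^ 2 := by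
  rw [sq, ← Real.exp_add]; norm_num

lemma hD_EB : HasDerivAt (fun ε : ℝ => iotaEB (1/2) (-(ε+1)))
    (-((3/8) * Real.exp (-2) / (1 + 1/2 * Real.exp (-2))^2)) 1 := by
  have hid : HasDerivAt (fun ε:ℝ => -(ε+1)) (-1) 1 := ((hasDerivAt_id 1).add_const 1).neg
  have hexp := hid.exp
  have hden := (hexp.const_mul (1/2:ℝ)).const_add 1
  have hq := (hasDerivAt_const (1:ℝ) ((1:ℝ) - (1/2)^2)).div hden
    (by positivity)
  have hfin := hq.const_sub 1
  simp only [iotaEB]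
  convert hfin using 1 <;> try rfl
  rw [show (-(1+1):ℝ) = -2 by norm_num]
  ring

lemma hne1_EB : 2 * (iotaEB (1/2) (-2) - iotaEB (1/2) (-1)) ≠ iotaEB (1/2) (-2) - 1/2 := by
  have hs0 : 0 < Real.exp (-1) := Real.exp_pos _
  have hs1 : Real.exp (-1) < 1/2 := exp_m1_lt
  set s := Real.exp (-1) with hs
  simp only [iotaEB, exp_m2_sq, ← hs]
  intro h
  have d1 : (1:ℝ) + 1/2 * s^2 ≠ 0 := by positivity
  have d2 : (1:ℝ) + 1/2 * s ≠ 0 := by positivity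
  field_simp at h
  nlinarith [mul_pos (mul_pos (show (0:ℝ) < 1 - s by linarith)
    (show (0:ℝ) < 1 - s by linarith)) (show (0:ℝ) < 2 - s by linarith), hs0, hs1]

lemma hne2_EB :
    2 * (-((3/8) * Real.exp (-2) / (1 + 1/2 * Real.exp (-2))^2)) ≠ iotaEB (1/2) (-2) - 1/2 := by
  have hs0 : 0 < Real.exp (-1) := Real.exp_pos _
  have hs1 : Real.exp (-1) < 1/2 := exp_m1_lt
  set s := Real.exp (-1) with hs
  simp only [iotaEB, exp_m2_sq, ← hs]
  intro h
  have d1 : (1:ℝ) + 1/2 * s^2 ≠ 0 := by positivity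
  field_simp at h
  nlinarith [hs0, hs1, mul_pos hs0 hs0, sq_nonneg s, sq_nonneg (s*s),
    mul_pos (mul_pos hs0 hs0) (mul_pos hs0 hs0),
    mul_pos (show (0:ℝ) < 1/2 - s by linarith) hs0]
end AuxCE

/-- Each of ctrb^r, ctrb^{ri}, and ctrb^g violates quantitative
contribution existence w.r.t. the QE semantics and w.r.t. the EB semantics: there exist
an acyclic QBAG G and a ∈ A such that the sum of contributions to a differs from
σ_G(a) − τ(a). -/
theorem ctrbR_ctrbRI_ctrbG_violate_quant_contribution_existence_QE_EB :
    ∀ σ : QBAG → ℕ → ℝ, (IsQE σ ∨ IsEB σ) →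
      ∃ G : QBAG, G.WF ∧ G.Acyclic ∧ ∃ a ∈ G.args,
        (∑ x ∈ G.args.erase a, ctrbR σ G a x) ≠ σ G a - G.tau a ∧
        (∑ x ∈ G.args.erase a, ctrbRI σ G a x) ≠ σ G a - G.tau a ∧
        (∑ x ∈ G.args.erase a, ctrbG σ G a x) ≠ σ G a - G.tau a := by
  intro σ hsem
  rcases hsem with hQE | hEB
  · exact main_aux iotaQE σ iotaQE_zero hQE (-2/25) hD_QE
      (by rw [iotaQE_m2, iotaQE_m1]; norm_num) (by rw [iotaQE_m2]; norm_num)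
  · exact main_aux iotaEB σ iotaEB_zero hEB _ hD_EB hne1_EB hne2_EB
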